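/- Let g : [0,∞) → [0,∞) be nondecreasing, set G(t) := ∫₀ᵗ g(s) ds, and suppose there are constants 1 < g₀ ≤ g⁰ with g₀ ≤ t·g(t)/G(t) ≤ g⁰ for all t > 0. Then for every nonempty bounded family (t_i)_{i ∈ I} of nonnegative real numbers, g( sup_{i ∈ I} t_i ) ≤ (g⁰/g₀)·2^{g⁰ − 1}·sup_{i ∈ I} g(t_i). -/

import Mathlib

open MeasureTheory Set Filter

/-- **Lemma 5.9** (for an Orlicz function `G` with right derivative `g` satisfying the
structure condition `g₀ ≤ t·g(t)/G(t) ≤ g⁰`, `g` applied to a supremum of a bounded family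
of nonnegative reals is controlled by the supremum of the values of `g`). -/
theorem g_sup_le_const_mul_sup_g (g G : ℝ → ℝ) (g₀ gu : ℝ)
    (hg_mono : MonotoneOn g (Set.Ici 0)) (hg_nonneg : ∀ t : ℝ, 0 ≤ t → 0 ≤ g t)
    (hGdef : ∀ t : ℝ, 0 ≤ t → G t = ∫ s in Set.Ioc (0:ℝ) t, g s)
    (hg₀ : 1 < g₀) (hgu : g₀ ≤ gu)
    (hSC : ∀ t : ℝ, 0 < t → g₀ * G t ≤ t * g t ∧ t * g t ≤ gu * G t)
    {ι : Type*} [Nonempty ι] (t : ι → ℝ) (ht0 : ∀ i, 0 ≤ t i)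
    (hbd : BddAbove (Set.range t)) :
    g (⨆ i, t i) ≤ (gu / g₀) * 2 ^ (gu - 1) * ⨆ i, g (t i) := by
  obtain ⟨i0⟩ := ‹Nonempty ι›
  set T : ℝ := ⨆ i, t i with hT
  set S : ℝ := ⨆ i, g (t i) with hS
  have hti_le : ∀ i, t i ≤ T := fun i => le_ciSup hbd i
  have hT0 : 0 ≤ T := le_trans (ht0 i0) (hti_le i0)
  have hbdS : BddAbove (Set.range fun i => g (t i)) := by
    refine ⟨g T, ?_⟩
    rintro _ ⟨i, rfl⟩
    exact hg_mono (ht0 i) hT0 (hti_le i)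
  have hS_le : ∀ i, g (t i) ≤ S := fun i => le_ciSup hbdS i
  have hS0 : 0 ≤ S := le_trans (hg_nonneg _ (ht0 i0)) (hS_le i0)
  have hgu0 : 0 < gu := lt_of_lt_of_le (lt_trans one_pos hg₀) hgu
  have hg₀0 : 0 < g₀ := lt_trans one_pos hg₀
  have hC1 : (1 : ℝ) ≤ 2 ^ (gu - 1) := Real.one_le_rpow one_le_two (by linarith)
  have hgT0 : 0 ≤ g T := hg_nonneg T hT0
  -- main claim : g T ≤ gu / g₀ * S
  have main : g T ≤ gu / g₀ * S := by
    rcases eq_or_lt_of_le hT0 with hTz | hTpos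
    · -- T = 0, so t i0 = 0 = T
      have : t i0 = T := le_antisymm (hti_le i0) (by rw [← hTz]; exact ht0 i0)
      have h1 : g T ≤ S := this ▸ hS_le i0
      have : (1:ℝ) ≤ gu / g₀ := (one_le_div hg₀0).2 hgu
      nlinarith
    · -- T > 0
      have hint : IntegrableOn g (Set.Ioc (0:ℝ) T) := by
        have : IntegrableOn g (Set.Icc (0:ℝ) T) :=
          (hg_mono.mono (Set.Icc_subset_Ici_self)).integrableOn_isCompact isCompact_Icc
        exact this.mono_set Set.Ioc_subset_Icc_self
      have key : ∀ δ : ℝ, 0 < δ → δ < T → T * g T ≤ gu * (T * S / g₀ + δ * g T) := by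
        intro δ hδ0 hδT
        obtain ⟨i, hi⟩ := exists_lt_of_lt_ciSup (show T - δ < T by linarith)
        have hti0 : 0 < t i := by linarith
        have hGi : G (t i) ≤ T * S / g₀ := by
          have h1 := (hSC (t i) hti0).1
          have h2 : t i * g (t i) ≤ T * S := by
            have := hS_le i
            have := hg_nonneg (t i) (ht0 i)
            nlinarith [hti_le i, hg_nonneg (t i) (ht0 i)]
          rw [le_div_iff₀ hg₀0]
          nlinarith
        have hsplit : G T = G (t i) + ∫ s in Set.Ioc (t i) T, g s := by
          rw [hGdef T hT0, hGdef (t i) (ht0 i)]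
          rw [← MeasureTheory.setIntegral_union (Set.Ioc_disjoint_Ioc_of_le le_rfl)
            measurableSet_Ioc (hint.mono_set (Set.Ioc_subset_Ioc_right (hti_le i)))
            (hint.mono_set (Set.Ioc_subset_Ioc_left (ht0 i)))]
          rw [Set.Ioc_union_Ioc_eq_Ioc (ht0 i) (hti_le i)]
        have htail : (∫ s in Set.Ioc (t i) T, g s) ≤ δ * g T := by
          have h1 : (∫ s in Set.Ioc (t i) T, g s) ≤ ∫ _ in Set.Ioc (t i) T, g T := by
            apply MeasureTheory.setIntegral_mono_on
              (hint.mono_set (Set.Ioc_subset_Ioc_left (ht0 i)))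
              (integrableOn_const (by simp [Real.volume_Ioc, ENNReal.ofReal_lt_top]))
              measurableSet_Ioc
            intro x hx
            exact hg_mono (le_trans (ht0 i) hx.1.le) hT0 hx.2
          have h2 : (∫ _ in Set.Ioc (t i) T, g T) = (T - t i) * g T := by
            rw [MeasureTheory.setIntegral_const, Real.volume_real_Ioc,
              max_eq_left (by linarith [hti_le i]), smul_eq_mul]
          rw [h2] at h1
          nlinarith
        have hSCT := (hSC T hTpos).2
        have : G T ≤ T * S / g₀ + δ * g T := by rw [hsplit]; linarith
        nlinarith
      -- take δ → 0
      have hmain' : T * g T ≤ gu * (T * S / g₀) := by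
        refine le_of_forall_pos_le_add fun ε hε => ?_
        set δ : ℝ := min (T / 2) (ε / (gu * (g T + 1))) with hδ
        have hδ0 : 0 < δ := lt_min (by linarith) (div_pos hε (by positivity))
        have hδT : δ < T := lt_of_le_of_lt (min_le_left _ _) (by linarith)
        have h := key δ hδ0 hδT
        have hδε : gu * (δ * g T) ≤ ε := by
          have hle : δ ≤ ε / (gu * (g T + 1)) := min_le_right _ _
          rw [le_div_iff₀ (by positivity)] at hle
          nlinarith
        nlinarith
      have hq : gu * (T * S / g₀) * g₀ = gu * S * T := by field_simp
      have h3 : T * g T * g₀ ≤ gu * S * T :=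
        hq ▸ mul_le_mul_of_nonneg_right hmain' hg₀0.le
      rw [div_mul_eq_mul_div, le_div_iff₀ hg₀0]
      exact le_of_mul_le_mul_right (by linarith) hTpos
  have hfac : 0 ≤ gu / g₀ := le_of_lt (div_pos hgu0 hg₀0)
  nlinarith [mul_le_mul_of_nonneg_left hC1 (mul_nonneg hfac hS0)]
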